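/- Let d_S, d_I > 0 and let Λ, β, γ, μ : [0,1] → ℝ be continuous and positive on [0,1]. Suppose S, I : [0,1] → ℝ are twice continuously differentiable on [0,1] with S > 0 and I > 0 on [0,1], satisfy S'(0) = S'(1) = 0 and I'(0) = I'(1) = 0, and solve -d_S·S''(x) = Λ(x) - S(x) - β(x)·S(x)·I(x) + γ(x)·I(x) and -d_I·I''(x) = β(x)·S(x)·I(x) - (γ(x)+μ(x))·I(x) for all x ∈ [0,1]. Then (min_{[0,1]} μ)·∫₀¹ I(x) dx ≤ ∫₀¹ Λ(x) dx and (min_{[0,1]} β)·∫₀¹ S(x)·I(x) dx ≤ (max_{[0,1]} γ + max_{[0,1]} μ)·∫₀¹ I(x) dx. -/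

import Mathlib

/-- L¹ a priori bounds for the 1-D steady state problem, obtained by integrating
both equations over `[0,1]` and using the Neumann boundary conditions. -/
theorem stmt_13 (dS dI : ℝ) (hdS : 0 < dS) (hdI : 0 < dI)
    (Λ β γ μ : ℝ → ℝ)
    (hΛc : ContinuousOn Λ (Set.Icc 0 1)) (hβc : ContinuousOn β (Set.Icc 0 1))
    (hγc : ContinuousOn γ (Set.Icc 0 1)) (hμc : ContinuousOn μ (Set.Icc 0 1))
    (hΛpos : ∀ x ∈ Set.Icc (0 : ℝ) 1, 0 < Λ x)
    (hβpos : ∀ x ∈ Set.Icc (0 : ℝ) 1, 0 < β x)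
    (hγpos : ∀ x ∈ Set.Icc (0 : ℝ) 1, 0 < γ x)
    (hμpos : ∀ x ∈ Set.Icc (0 : ℝ) 1, 0 < μ x)
    (S S' S'' I I' I'' : ℝ → ℝ)
    (hS1 : ∀ x ∈ Set.Icc (0 : ℝ) 1, HasDerivWithinAt S (S' x) (Set.Icc 0 1) x)
    (hS2 : ∀ x ∈ Set.Icc (0 : ℝ) 1, HasDerivWithinAt S' (S'' x) (Set.Icc 0 1) x)
    (hS''c : ContinuousOn S'' (Set.Icc 0 1))
    (hI1 : ∀ x ∈ Set.Icc (0 : ℝ) 1, HasDerivWithinAt I (I' x) (Set.Icc 0 1) x)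
    (hI2 : ∀ x ∈ Set.Icc (0 : ℝ) 1, HasDerivWithinAt I' (I'' x) (Set.Icc 0 1) x)
    (hI''c : ContinuousOn I'' (Set.Icc 0 1))
    (hSpos : ∀ x ∈ Set.Icc (0 : ℝ) 1, 0 < S x)
    (hIpos : ∀ x ∈ Set.Icc (0 : ℝ) 1, 0 < I x)
    (hbcS0 : S' 0 = 0) (hbcS1 : S' 1 = 0) (hbcI0 : I' 0 = 0) (hbcI1 : I' 1 = 0)
    (heqS : ∀ x ∈ Set.Icc (0 : ℝ) 1,
      -dS * S'' x = Λ x - S x - β x * S x * I x + γ x * I x)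
    (heqI : ∀ x ∈ Set.Icc (0 : ℝ) 1,
      -dI * I'' x = β x * S x * I x - (γ x + μ x) * I x) :
    sInf (μ '' Set.Icc 0 1) * (∫ x in (0:ℝ)..1, I x) ≤ (∫ x in (0:ℝ)..1, Λ x) ∧
    sInf (β '' Set.Icc 0 1) * (∫ x in (0:ℝ)..1, S x * I x)
      ≤ (sSup (γ '' Set.Icc 0 1) + sSup (μ '' Set.Icc 0 1))
          * (∫ x in (0:ℝ)..1, I x) := by
  have h01 : (0:ℝ) ≤ 1 := zero_le_one
  have huIcc : Set.uIcc (0:ℝ) 1 = Set.Icc 0 1 := Set.uIcc_of_le h01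
  have hScont : ContinuousOn S (Set.Icc 0 1) := fun x hx => (hS1 x hx).continuousWithinAt
  have hIcont : ContinuousOn I (Set.Icc 0 1) := fun x hx => (hI1 x hx).continuousWithinAt
  have hint : ∀ {f : ℝ → ℝ}, ContinuousOn f (Set.Icc 0 1) →
      IntervalIntegrable f MeasureTheory.volume 0 1 := by
    intro f hf
    exact ContinuousOn.intervalIntegrable (huIcc ▸ hf)
  have ftc : ∀ (f f' : ℝ → ℝ),
      (∀ x ∈ Set.Icc (0:ℝ) 1, HasDerivWithinAt f (f' x) (Set.Icc 0 1) x) →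
      ContinuousOn f' (Set.Icc 0 1) → (∫ x in (0:ℝ)..1, f' x) = f 1 - f 0 := by
    intro f f' hd hc
    apply intervalIntegral.integral_eq_sub_of_hasDeriv_right_of_le h01
      (fun x hx => (hd x hx).continuousWithinAt) _ (hint hc)
    intro x hx
    exact ((hd x (Set.mem_Icc_of_Ioo hx)).hasDerivAt
      (Icc_mem_nhds hx.1 hx.2)).hasDerivWithinAt
  have hS''0 : (∫ x in (0:ℝ)..1, S'' x) = 0 := by
    rw [ftc S' S'' hS2 hS''c, hbcS1, hbcS0, sub_zero]
  have hI''0 : (∫ x in (0:ℝ)..1, I'' x) = 0 := by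
    rw [ftc I' I'' hI2 hI''c, hbcI1, hbcI0, sub_zero]
  have intΛ := hint hΛc
  have intS := hint hScont
  have intI := hint hIcont
  have intβSI : IntervalIntegrable (fun x => β x * S x * I x) MeasureTheory.volume 0 1 := hint ((hβc.mul hScont).mul hIcont)
  have intγI : IntervalIntegrable (fun x => γ x * I x) MeasureTheory.volume 0 1 := hint (hγc.mul hIcont)
  have intμI : IntervalIntegrable (fun x => μ x * I x) MeasureTheory.volume 0 1 := hint (hμc.mul hIcont)
  have intSI : IntervalIntegrable (fun x => S x * I x) MeasureTheory.volume 0 1 := hint (hScont.mul hIcont)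
  -- integrate the S equation
  have hA : (∫ x in (0:ℝ)..1, Λ x) - (∫ x in (0:ℝ)..1, S x)
      - (∫ x in (0:ℝ)..1, β x * S x * I x) + (∫ x in (0:ℝ)..1, γ x * I x) = 0 := by
    have h1 : (∫ x in (0:ℝ)..1, (Λ x - S x - β x * S x * I x + γ x * I x)) = 0 := by
      have hc := @intervalIntegral.integral_congr ℝ _ _
        (fun x => -dS * S'' x)
        (fun x => Λ x - S x - β x * S x * I x + γ x * I x)
        MeasureTheory.volume 0 1
        (fun x hx => heqS x (huIcc ▸ hx))
      rw [intervalIntegral.integral_const_mul, hS''0, mul_zero] at hc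
      exact hc.symm
    rw [intervalIntegral.integral_add ((intΛ.sub intS).sub intβSI) intγI,
      intervalIntegral.integral_sub (intΛ.sub intS) intβSI,
      intervalIntegral.integral_sub intΛ intS] at h1
    linarith
  -- integrate the I equation
  have hB : (∫ x in (0:ℝ)..1, β x * S x * I x)
      = (∫ x in (0:ℝ)..1, γ x * I x) + (∫ x in (0:ℝ)..1, μ x * I x) := by
    have h1 : (∫ x in (0:ℝ)..1, (β x * S x * I x - (γ x * I x + μ x * I x))) = 0 := by
      have hcongr : Set.EqOn (fun x => β x * S x * I x - (γ x * I x + μ x * I x))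
          (fun x => -dI * I'' x) (Set.uIcc 0 1) := by
        intro x hx
        have := heqI x (huIcc ▸ hx)
        simp only
        linarith [this, mul_comm (γ x + μ x) (I x)]
      rw [intervalIntegral.integral_congr hcongr,
        intervalIntegral.integral_const_mul, hI''0, mul_zero]
    rw [intervalIntegral.integral_sub intβSI (intγI.add intμI),
      intervalIntegral.integral_add intγI intμI] at h1
    linarith
  have hiS : 0 ≤ (∫ x in (0:ℝ)..1, S x) :=
    intervalIntegral.integral_nonneg h01 (fun x hx => (hSpos x hx).le)
  have hiγI : 0 ≤ (∫ x in (0:ℝ)..1, γ x * I x) :=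
    intervalIntegral.integral_nonneg h01
      (fun x hx => mul_nonneg (hγpos x hx).le (hIpos x hx).le)
  have bddμ : BddBelow (μ '' Set.Icc 0 1) :=
    (isCompact_Icc.image_of_continuousOn hμc).bddBelow
  have bddβ : BddBelow (β '' Set.Icc 0 1) :=
    (isCompact_Icc.image_of_continuousOn hβc).bddBelow
  have bddγ : BddAbove (γ '' Set.Icc 0 1) :=
    (isCompact_Icc.image_of_continuousOn hγc).bddAbove
  have bddμ' : BddAbove (μ '' Set.Icc 0 1) :=
    (isCompact_Icc.image_of_continuousOn hμc).bddAbove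
  constructor
  · -- first bound
    have h1 : sInf (μ '' Set.Icc 0 1) * (∫ x in (0:ℝ)..1, I x)
        ≤ ∫ x in (0:ℝ)..1, μ x * I x := by
      rw [← intervalIntegral.integral_const_mul]
      apply intervalIntegral.integral_mono_on h01
        (intervalIntegrable_const.mul_continuousOn (huIcc ▸ hIcont)) intμI
      intro x hx
      exact mul_le_mul_of_nonneg_right (csInf_le bddμ ⟨x, hx, rfl⟩) (hIpos x hx).le
    linarith
  · -- second bound
    have h1 : sInf (β '' Set.Icc 0 1) * (∫ x in (0:ℝ)..1, S x * I x)
        ≤ ∫ x in (0:ℝ)..1, β x * S x * I x := by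
      rw [← intervalIntegral.integral_const_mul]
      apply intervalIntegral.integral_mono_on h01
        (intervalIntegrable_const.mul_continuousOn (huIcc ▸ (hScont.mul hIcont))) intβSI
      intro x hx
      have h2 := csInf_le bddβ ⟨x, hx, rfl⟩
      have h3 : 0 ≤ S x * I x := mul_nonneg (hSpos x hx).le (hIpos x hx).le
      nlinarith
    have h2 : (∫ x in (0:ℝ)..1, γ x * I x) + (∫ x in (0:ℝ)..1, μ x * I x)
        ≤ (sSup (γ '' Set.Icc 0 1) + sSup (μ '' Set.Icc 0 1)) * (∫ x in (0:ℝ)..1, I x) := by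
      rw [← intervalIntegral.integral_const_mul,
        ← intervalIntegral.integral_add intγI intμI]
      apply intervalIntegral.integral_mono_on h01 (intγI.add intμI)
        (intervalIntegrable_const.mul_continuousOn (huIcc ▸ hIcont))
      intro x hx
      have hγle := le_csSup bddγ (⟨x, hx, rfl⟩ : γ x ∈ γ '' Set.Icc 0 1)
      have hμle := le_csSup bddμ' (⟨x, hx, rfl⟩ : μ x ∈ μ '' Set.Icc 0 1)
      have hI0 := (hIpos x hx).le
      nlinarith
    linarith
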